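/- For every section-hyperbolic polynomial a_0 + a_1 x + ... + a_n x^n and every index i with 1 ≤ i ≤ n−1, one has a_i^2 ≥ 3·a_{i−1}·a_{i+1}. Consequently, for every i ≥ 1, the infimum m_i of a_i^2/(a_{i−1} a_{i+1}) over all section-hyperbolic polynomials of degree at least i+1 satisfies m_i ≥ 3. -/

import Mathlib

open Polynomial Filter

/-- A real polynomial is hyperbolic if all of its complex roots are real. -/
def Hyperbolic (P : Polynomial ℝ) : Prop :=
  ∀ z : ℂ, Polynomial.aeval z P = 0 → z.im = 0

/-- The `i`-th section `a_0 + a_1 x + ... + a_i x^i` of the coefficient sequence `a`. -/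
noncomputable def sect (a : ℕ → ℝ) (i : ℕ) : Polynomial ℝ :=
  ∑ j ∈ Finset.range (i + 1), Polynomial.C (a j) * Polynomial.X ^ j

/-- A polynomial `a_0 + ... + a_n x^n` with all coefficients positive is section-hyperbolic
if each of its sections of degree `1,...,n` is hyperbolic. -/
def SectionHyperbolic (a : ℕ → ℝ) (n : ℕ) : Prop :=
  (∀ i ≤ n, 0 < a i) ∧ ∀ i, 1 ≤ i → i ≤ n → Hyperbolic (sect a i)

namespace SH


/-- power sums -/
noncomputable def psum (k : ℕ) (s : Multiset ℝ) : ℝ := (s.map (· ^ k)).sum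

lemma psum_cons (k : ℕ) (a : ℝ) (s : Multiset ℝ) :
    psum k (a ::ₘ s) = a ^ k + psum k s := by
  simp [psum]

lemma psum_nonneg (k : ℕ) (s : Multiset ℝ) (h : ∀ x ∈ s, 0 ≤ x) : 0 ≤ psum k s := by
  apply Multiset.sum_nonneg
  intro x hx
  obtain ⟨y, hy, rfl⟩ := Multiset.mem_map.mp hx
  exact pow_nonneg (h y hy) k

lemma esymm_zero' (s : Multiset ℝ) : s.esymm 0 = 1 := by
  simp [Multiset.esymm, Multiset.powersetCard_zero_left]

lemma esymm_cons (a : ℝ) (s : Multiset ℝ) (n : ℕ) :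
    (a ::ₘ s).esymm (n+1) = s.esymm (n+1) + a * s.esymm n := by
  simp only [Multiset.esymm, Multiset.powersetCard_cons, Multiset.map_add, Multiset.sum_add,
    Multiset.map_map]
  congr 1
  rw [← Multiset.sum_map_mul_left]
  congr 1
  apply Multiset.map_congr rfl
  intro t ht
  simp [Multiset.prod_cons]

lemma esymm_nonneg (s : Multiset ℝ) (h : ∀ x ∈ s, 0 ≤ x) (n : ℕ) : 0 ≤ s.esymm n := by
  apply Multiset.sum_nonneg
  intro x hx
  obtain ⟨t, ht, rfl⟩ := Multiset.mem_map.mp hx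
  rw [Multiset.mem_powersetCard] at ht
  exact Multiset.prod_nonneg (fun y hy => h y (Multiset.mem_of_le ht.1 hy))

/-- identities between the first three elementary symmetric functions and power sums -/
lemma esymm_psum (s : Multiset ℝ) :
    s.esymm 1 = psum 1 s ∧ 2 * s.esymm 2 = (psum 1 s)^2 - psum 2 s ∧
      6 * s.esymm 3 = (psum 1 s)^3 - 3 * psum 1 s * psum 2 s + 2 * psum 3 s := by
  induction s using Multiset.induction with
  | empty =>
      have h0 : ∀ n, (0 : Multiset ℝ).esymm (n+1) = 0 := by
        intro n; simp [Multiset.esymm, Multiset.powersetCard_zero_right]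
      refine ⟨?_, ?_, ?_⟩ <;> simp [h0 0, h0 1, h0 2, psum]
  | cons a s ih =>
      obtain ⟨h1, h2, h3⟩ := ih
      have e1 := esymm_cons a s 0
      have e2 := esymm_cons a s 1
      have e3 := esymm_cons a s 2
      rw [esymm_zero'] at e1
      have p1 := psum_cons 1 a s
      have p2 := psum_cons 2 a s
      have p3 := psum_cons 3 a s
      norm_num at e1 e2 e3 p1 p2 p3
      refine ⟨?_, ?_, ?_⟩
      · rw [e1, p1, h1]; ring
      · rw [e2, p1, p2]; linear_combination h2 + 2*a*h1
      · rw [e3, p1, p2, p3]; linear_combination h3 + 3*a*h2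

/-- termwise helper: ∑ x(a-x)² ≥ 0 gives 2a·p₂ ≤ a²p₁ + p₃ -/
lemma psum_helper (a : ℝ) (ha : 0 ≤ a) (s : Multiset ℝ) (h : ∀ x ∈ s, 0 ≤ x) :
    2 * a * psum 2 s ≤ a^2 * psum 1 s + psum 3 s := by
  induction s using Multiset.induction with
  | empty => simp [psum]
  | cons y s ih =>
      have hy : 0 ≤ y := h y (Multiset.mem_cons_self y s)
      have ih' := ih (fun x hx => h x (Multiset.mem_cons_of_mem hx))
      rw [psum_cons, psum_cons, psum_cons]
      nlinarith [mul_nonneg hy (sq_nonneg (a - y))]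

/-- Cauchy–Schwarz : p₂² ≤ p₁ p₃ -/
lemma psum_cs (s : Multiset ℝ) (h : ∀ x ∈ s, 0 ≤ x) :
    (psum 2 s)^2 ≤ psum 1 s * psum 3 s := by
  induction s using Multiset.induction with
  | empty => simp [psum]
  | cons a s ih =>
      have ha : 0 ≤ a := h a (Multiset.mem_cons_self a s)
      have h' : ∀ x ∈ s, 0 ≤ x := fun x hx => h x (Multiset.mem_cons_of_mem hx)
      have ih' := ih h'
      have hlp := psum_helper a ha s h'
      rw [psum_cons, psum_cons, psum_cons]
      nlinarith [psum_nonneg 1 s h', psum_nonneg 2 s h', psum_nonneg 3 s h', sq_nonneg a, pow_nonneg ha 3]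

lemma psum_sq_helper (a : ℝ) (s : Multiset ℝ) (h : ∀ x ∈ s, 0 ≤ x) :
    2 * a * psum 1 s ≤ (Multiset.card s : ℝ) * a^2 + psum 2 s := by
  induction s using Multiset.induction with
  | empty => simp [psum]
  | cons y t iht =>
      have ht' : ∀ x ∈ t, 0 ≤ x := fun x hx => h x (Multiset.mem_cons_of_mem hx)
      have := iht ht'
      rw [psum_cons, psum_cons, Multiset.card_cons]
      push_cast
      nlinarith [sq_nonneg (a - y)]

/-- p₁² ≤ card · p₂ -/
lemma psum_sq_le (s : Multiset ℝ) (h : ∀ x ∈ s, 0 ≤ x) :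
    (psum 1 s)^2 ≤ (Multiset.card s : ℝ) * psum 2 s := by
  induction s using Multiset.induction with
  | empty => simp [psum]
  | cons a s ih =>
      have ha : 0 ≤ a := h a (Multiset.mem_cons_self a s)
      have h' : ∀ x ∈ s, 0 ≤ x := fun x hx => h x (Multiset.mem_cons_of_mem hx)
      have ih' := ih h'
      have hlp := psum_sq_helper a s h'
      rw [psum_cons, psum_cons, Multiset.card_cons]
      push_cast
      nlinarith [psum_nonneg 2 s h', sq_nonneg a]

/-- The key inequality : 4 e₂² ≤ 3 e₁ e₃ + e₁² e₂ for nonnegative reals. -/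
lemma key_esymm_ineq (s : Multiset ℝ) (h : ∀ x ∈ s, 0 ≤ x) :
    4 * (s.esymm 2)^2 ≤ 3 * s.esymm 1 * s.esymm 3 + (s.esymm 1)^2 * s.esymm 2 := by
  obtain ⟨h1, h2, h3⟩ := esymm_psum s
  have cs := psum_cs s h
  have E2 : s.esymm 2 = ((psum 1 s)^2 - psum 2 s)/2 := by linarith
  have E3 : s.esymm 3 = ((psum 1 s)^3 - 3*psum 1 s*psum 2 s + 2*psum 3 s)/6 := by linarith
  rw [h1, E2, E3]
  nlinarith [cs]




lemma hyp_ne_zero {p : ℝ[X]} (h : Hyperbolic p) : p ≠ 0 := by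
  intro h0
  have := h Complex.I (by simp [h0])
  simp [Complex.I_im] at this

lemma aeval_real (p : ℝ[X]) (x : ℝ) :
    (Polynomial.aeval (x : ℂ) p) = ((p.eval x : ℝ) : ℂ) := by
  rw [Polynomial.aeval_def]
  exact Polynomial.eval₂_at_apply (algebraMap ℝ ℂ) x

/-- A hyperbolic real polynomial splits into real linear factors. -/
lemma hyp_factor : ∀ (n : ℕ) (p : ℝ[X]), p.natDegree = n → Hyperbolic p →
    ∃ s : Multiset ℝ, Multiset.card s = n ∧
      p = C p.leadingCoeff * (s.map fun r => X - C r).prod := by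
  intro n
  induction n with
  | zero =>
      intro p hdeg _
      refine ⟨0, rfl, ?_⟩
      have hC := Polynomial.eq_C_of_natDegree_eq_zero hdeg
      have hl : p.leadingCoeff = p.coeff 0 := by rw [Polynomial.leadingCoeff, hdeg]
      rw [hl]
      simpa using hC
  | succ n ih =>
      intro p hdeg hyp
      have hp0 : p ≠ 0 := hyp_ne_zero hyp
      -- find a complex root
      have hmapne : p.map (algebraMap ℝ ℂ) ≠ 0 := by
        simpa using (Polynomial.map_ne_zero_iff (algebraMap ℝ ℂ).injective).mpr hp0
      have hdegC : 0 < (p.map (algebraMap ℝ ℂ)).degree := by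
        rw [Polynomial.degree_map, Polynomial.degree_eq_natDegree hp0, hdeg]
        exact_mod_cast Nat.succ_pos n
      obtain ⟨z, hz⟩ := Complex.exists_root hdegC
      have hzim : z.im = 0 := by
        apply hyp
        rw [Polynomial.aeval_def, ← Polynomial.eval_map]
        exact hz
      set x := z.re with hx
      have hzx : z = (x : ℂ) := Complex.ext rfl (by simp [hzim])
      have hroot : p.IsRoot x := by
        have : (Polynomial.aeval (x : ℂ) p) = 0 := by
          rw [← hzx, Polynomial.aeval_def, ← Polynomial.eval_map]; exact hz
        rw [aeval_real] at this
        exact_mod_cast Complex.ofReal_eq_zero.mp this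
      obtain ⟨q, hq⟩ := (Polynomial.dvd_iff_isRoot.mpr hroot)
      have hq0 : q ≠ 0 := by
        intro h0; rw [h0, mul_zero] at hq; exact hp0 hq
      have hdegq : q.natDegree = n := by
        have := Polynomial.natDegree_mul (Polynomial.X_sub_C_ne_zero x) hq0
        rw [← hq, hdeg] at this
        simp [Polynomial.natDegree_X_sub_C] at this
        omega
      have hhypq : Hyperbolic q := by
        intro w hw
        apply hyp
        rw [hq, map_mul, hw, mul_zero]
      obtain ⟨s, hcard, hfac⟩ := ih q hdegq hhypq
      have hlead : p.leadingCoeff = q.leadingCoeff := by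
        rw [hq, Polynomial.leadingCoeff_mul, Polynomial.leadingCoeff_X_sub_C, one_mul]
      refine ⟨x ::ₘ s, by simp [hcard], ?_⟩
      rw [hlead, Multiset.map_cons, Multiset.prod_cons]
      conv_lhs => rw [hq, hfac]
      ring

/-- positive coefficients ⇒ no nonnegative real root -/
lemma eval_pos_of_nonneg {p : ℝ[X]} (hpos : ∀ j ≤ p.natDegree, 0 < p.coeff j) {t : ℝ}
    (ht : 0 ≤ t) : 0 < p.eval t := by
  rw [Polynomial.eval_eq_sum_range]
  apply Finset.sum_pos'
  · intro j hj
    rw [Finset.mem_range] at hj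
    exact mul_nonneg (le_of_lt (hpos j (by omega))) (pow_nonneg ht j)
  · refine ⟨0, Finset.mem_range.mpr (by omega), ?_⟩
    simpa using hpos 0 (by omega)





/-- hyperbolic polynomial with positive coefficients: Vieta in terms of positive root magnitudes -/
lemma hyp_pos_vieta (p : ℝ[X]) (hyp : Hyperbolic p)
    (hpos : ∀ j ≤ p.natDegree, 0 < p.coeff j) :
    ∃ t : Multiset ℝ, Multiset.card t = p.natDegree ∧ (∀ x ∈ t, 0 < x) ∧
      ∀ k ≤ p.natDegree, p.coeff k = p.coeff p.natDegree * t.esymm (p.natDegree - k) := by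
  obtain ⟨s, hcard, hfac⟩ := hyp_factor p.natDegree p rfl hyp
  have hneg : ∀ r ∈ s, r < 0 := by
    intro r hr
    by_contra hge
    push_neg at hge
    have heval : p.eval r = 0 := by
      rw [hfac]
      rw [Polynomial.eval_mul, Polynomial.eval_C, Polynomial.eval_multiset_prod]
      have h0 : (0 : ℝ) ∈ (s.map fun r' => X - C r').map (Polynomial.eval r) := by
        rw [Multiset.map_map]
        refine Multiset.mem_map.mpr ⟨r, hr, ?_⟩
        simp
      rw [Multiset.prod_eq_zero h0, mul_zero]
    exact absurd heval (ne_of_gt (eval_pos_of_nonneg hpos hge))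
  refine ⟨s.map (fun r => -r), by simp [hcard], ?_, ?_⟩
  · intro x hx
    obtain ⟨r, hr, rfl⟩ := Multiset.mem_map.mp hx
    linarith [hneg r hr]
  · intro k hk
    have hfac' : p = C p.leadingCoeff * ((s.map (fun r => -r)).map fun r => X + C r).prod := by
      rw [Multiset.map_map]
      convert hfac using 3
      apply Multiset.map_congr rfl
      intro r _
      simp [map_neg, sub_eq_add_neg]
    have hlc : p.leadingCoeff = p.coeff p.natDegree := rfl
    conv_lhs => rw [hfac']
    rw [Polynomial.coeff_C_mul, Multiset.prod_X_add_C_coeff _ (by simp [hcard]; omega), hlc]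
    congr 2
    simp [hcard]

lemma base_ineq (p : ℝ[X]) (hyp : Hyperbolic p) (hdeg : p.natDegree = 2)
    (hpos : ∀ j ≤ p.natDegree, 0 < p.coeff j) :
    p.coeff 1 ^ 2 ≥ 3 * (p.coeff 0 * p.coeff 2) := by
  obtain ⟨t, hcard, htpos, hco⟩ := hyp_pos_vieta p hyp hpos
  have htn : ∀ x ∈ t, 0 ≤ x := fun x hx => le_of_lt (htpos x hx)
  have h0 := hco 0 (by omega)
  have h1 := hco 1 (by omega)
  have h2 := hco 2 (by omega)
  rw [hdeg] at h0 h1 h2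
  norm_num at h0 h1 h2
  rw [esymm_zero'] at h2
  obtain ⟨i1, i2, _⟩ := esymm_psum t
  have hsq := psum_sq_le t htn
  rw [hcard, hdeg] at hsq
  have hp2 := psum_nonneg 2 t htn
  have hL : 0 < p.coeff 2 := hpos 2 (by omega)
  push_cast at hsq
  have hE1sq' : (t.esymm 1)^2 = (psum 1 t)^2 := by rw [i1]
  have hE : (t.esymm 1)^2 ≥ 3 * t.esymm 2 := by linarith
  rw [h0, h1, h2]
  nlinarith [hE, hL, sq_nonneg (p.coeff 2), mul_pos hL hL]

lemma step_ineq (p : ℝ[X]) (m : ℕ) (hm : 3 ≤ m) (hyp : Hyperbolic p) (hdeg : p.natDegree = m)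
    (hpos : ∀ j ≤ p.natDegree, 0 < p.coeff j)
    (hprev : p.coeff (m-2) ^ 2 ≥ 3 * (p.coeff (m-3) * p.coeff (m-1))) :
    p.coeff (m-1) ^ 2 ≥ 3 * (p.coeff (m-2) * p.coeff m) := by
  obtain ⟨t, hcard, htpos, hco⟩ := hyp_pos_vieta p hyp hpos
  have htn : ∀ x ∈ t, 0 ≤ x := fun x hx => le_of_lt (htpos x hx)
  rw [hdeg] at hco
  have h1 := hco (m-1) (by omega)
  have h2 := hco (m-2) (by omega)
  have h3 := hco (m-3) (by omega)
  have hm' := hco m (by omega)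
  have e1 : m - (m-1) = 1 := by omega
  have e2 : m - (m-2) = 2 := by omega
  have e3 : m - (m-3) = 3 := by omega
  have em : m - m = 0 := by omega
  rw [e1] at h1; rw [e2] at h2; rw [e3] at h3; rw [em, esymm_zero', mul_one] at hm'
  set L := p.coeff m with hLdef
  have hL : 0 < L := by rw [hLdef]; exact hpos m (by omega)
  set E1 := t.esymm 1
  set E2 := t.esymm 2
  set E3 := t.esymm 3
  have hE1 : 0 ≤ E1 := esymm_nonneg t htn 1
  have hE2 : 0 ≤ E2 := esymm_nonneg t htn 2
  have hE3 : 0 ≤ E3 := esymm_nonneg t htn 3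
  have key := key_esymm_ineq t htn
  -- from hprev : E2^2 ≥ 3*(E3*E1)
  rw [h1, h2, h3] at hprev
  have hE : 3 * (E3 * E1) ≤ E2 ^ 2 := by
    have hmul : L^2 * (3 * (E3 * E1)) ≤ L^2 * E2^2 := by nlinarith [hprev]
    exact le_of_mul_le_mul_left hmul (pow_pos hL 2)
  have hE1sq : E1 ^ 2 ≥ 3 * E2 := by
    rcases eq_or_lt_of_le hE2 with h | h
    · rw [← h]; simpa using sq_nonneg E1
    · have h5 : (E1^2 - 3*E2) * E2 ≥ 0 := by nlinarith [key, hE]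
      nlinarith [h5, h]
  rw [h1, h2, hm']
  nlinarith [hE1sq, hL, mul_pos hL hL]




lemma sect_coeff (a : ℕ → ℝ) (i j : ℕ) :
    (sect a i).coeff j = if j ≤ i then a j else 0 := by
  classical
  rw [sect, Polynomial.finset_sum_coeff]
  simp only [Polynomial.coeff_C_mul, Polynomial.coeff_X_pow, mul_ite, mul_one, mul_zero]
  rw [Finset.sum_ite_eq (Finset.range (i+1)) j a]
  simp [Finset.mem_range, Nat.lt_succ_iff]

lemma sect_natDegree (a : ℕ → ℝ) (i : ℕ) (h : a i ≠ 0) : (sect a i).natDegree = i := by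
  apply le_antisymm
  · rw [Polynomial.natDegree_le_iff_coeff_eq_zero]
    intro N hN
    rw [sect_coeff, if_neg (by omega)]
  · apply Polynomial.le_natDegree_of_ne_zero
    rw [sect_coeff, if_pos le_rfl]
    exact h

theorem part1 (n : ℕ) (a : ℕ → ℝ) (hsh : SectionHyperbolic a n) :
    ∀ i, 1 ≤ i → i + 1 ≤ n → a i ^ 2 ≥ 3 * (a (i-1) * a (i+1)) := by
  intro i
  induction i using Nat.strong_induction_on with
  | _ i ih =>
    intro h1 hn
    obtain ⟨hpos, hhyp⟩ := hsh
    have hyp_p : Hyperbolic (sect a (i+1)) := hhyp (i+1) (by omega) hn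
    have hdeg : (sect a (i+1)).natDegree = i+1 :=
      sect_natDegree a (i+1) (ne_of_gt (hpos (i+1) hn))
    have hco : ∀ j, j ≤ i+1 → (sect a (i+1)).coeff j = a j := by
      intro j hj; rw [sect_coeff, if_pos hj]
    have hpos' : ∀ j ≤ (sect a (i+1)).natDegree, 0 < (sect a (i+1)).coeff j := by
      intro j hj
      rw [hdeg] at hj
      rw [hco j hj]
      exact hpos j (by omega)
    rcases eq_or_lt_of_le h1 with heq | hgt
    · -- i = 1
      subst heq
      have hyp2 : Hyperbolic (sect a 2) := by simpa using hyp_p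
      have hdeg2 : (sect a 2).natDegree = 2 := by simpa using hdeg
      have hpos2 : ∀ j ≤ (sect a 2).natDegree, 0 < (sect a 2).coeff j := by
        intro j hj
        rw [hdeg2] at hj
        rw [sect_coeff, if_pos hj]
        exact hpos j (by omega)
      have hb := base_ineq (sect a 2) hyp2 hdeg2 hpos2
      rw [sect_coeff, sect_coeff, sect_coeff, if_pos (by omega : (1:ℕ) ≤ 2),
        if_pos (by omega : (0:ℕ) ≤ 2), if_pos (by omega : (2:ℕ) ≤ 2)] at hb
      simpa using hb
    · -- i ≥ 2
      have hprev := ih (i-1) (by omega) (by omega) (by omega)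
      have hm : 3 ≤ i + 1 := by omega
      have hstep := step_ineq (sect a (i+1)) (i+1) hm hyp_p hdeg hpos' ?_
      · have g1 : i + 1 - 1 = i := by omega
        have g2 : i + 1 - 2 = i - 1 := by omega
        rw [g1, g2, hco i (by omega), hco (i-1) (by omega), hco (i+1) (by omega)] at hstep
        exact hstep
      · have g2 : i + 1 - 2 = i - 1 := by omega
        have g3 : i + 1 - 3 = i - 2 := by omega
        have g1 : i + 1 - 1 = i := by omega
        rw [g1, g2, g3, hco (i-1) (by omega), hco (i-2) (by omega), hco i (by omega)]
        have gg : i - 1 - 1 = i - 2 := by omega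
        have gg2 : i - 1 + 1 = i := by omega
        rw [gg, gg2] at hprev
        exact hprev



lemma exists_section_hyperbolic (n : ℕ) : ∃ a : ℕ → ℝ, SectionHyperbolic a n := by
  classical
  set M : ℝ := (n : ℝ) + 2 with hMdef
  have hM0 : 0 < M := by positivity
  have hM1 : 1 < M := by
    have : (0:ℝ) ≤ (n:ℝ) := Nat.cast_nonneg n
    rw [hMdef]; linarith
  set a : ℕ → ℝ := fun j => M ^ (2*n*j) / M ^ (j*j) with ha
  have apos : ∀ j, 0 < a j := fun j => by rw [ha]; positivity
  refine ⟨a, fun i _ => apos i, ?_⟩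
  intro k hk1 hkn
  set p : ℝ[X] := sect a k with hp
  have hdeg : p.natDegree = k := sect_natDegree a k (ne_of_gt (apos k))
  set x : ℕ → ℝ := fun j => -(M ^ (2*j)) / M ^ (2*n) with hx
  have hterm : ∀ j l : ℕ, a l * x j ^ l = (-1)^l * (M ^ (2*j*l) / M ^ (l*l)) := by
    intro j l
    have h1 : x j ^ l = (-1)^l * (M ^ (2*j*l) / M ^ (2*n*l)) := by
      rw [hx]
      simp only
      rw [show -(M ^ (2*j)) / M ^ (2*n) = (-1) * (M ^ (2*j) / M ^ (2*n)) by ring]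
      rw [mul_pow, div_pow, ← pow_mul, ← pow_mul]
    rw [ha, h1]
    simp only
    have e1 : (M:ℝ) ^ (2*n*l) ≠ 0 := by positivity
    have e2 : (M:ℝ) ^ (l*l) ≠ 0 := by positivity
    field_simp
  have hbound : ∀ j l : ℕ, l ≠ j → M ^ (2*j*l) / M ^ (l*l) ≤ M ^ (j*j) / M := by
    intro j l hne
    rw [div_le_div_iff₀ (by positivity) hM0]
    have hexp : 2*j*l + 1 ≤ j*j + l*l := by
      have hne' : (l:ℤ) ≠ j := by exact_mod_cast hne
      have h2 : (l:ℤ) - j ≥ 1 ∨ (j:ℤ) - l ≥ 1 := by omega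
      zify
      rcases h2 with h | h <;> nlinarith
    calc M ^ (2*j*l) * M = M ^ (2*j*l + 1) := by rw [pow_succ]
      _ ≤ M ^ (j*j + l*l) := pow_le_pow_right₀ (le_of_lt hM1) hexp
      _ = M ^ (j*j) * M ^ (l*l) := by rw [pow_add]
  have hsign : ∀ j, j ≤ k → 0 < (-1:ℝ)^j * p.eval (x j) := by
    intro j hj
    have heval : p.eval (x j) = ∑ l ∈ Finset.range (k+1), a l * x j ^ l := by
      rw [hp, sect, Polynomial.eval_finset_sum]
      apply Finset.sum_congr rfl
      intro l _
      simp
    have hjmem : j ∈ Finset.range (k+1) := Finset.mem_range.mpr (by omega)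
    rw [heval, ← Finset.add_sum_erase _ _ hjmem]
    have hmain : (-1:ℝ)^j * (a j * x j ^ j) = M ^ (j*j) := by
      rw [hterm j j]
      rw [show (-1:ℝ)^j * ((-1)^j * (M ^ (2*j*j) / M ^ (j*j)))
          = ((-1)*(-1))^j * (M ^ (2*j*j) / M ^ (j*j)) by rw [mul_pow]; ring]
      have e2 : (M:ℝ) ^ (j*j) ≠ 0 := by positivity
      rw [show ((-1:ℝ)*(-1)) = 1 by ring, one_pow, one_mul,
        show 2*j*j = j*j + j*j by ring, pow_add, mul_div_assoc, div_self e2, mul_one]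
    set S := ∑ l ∈ (Finset.range (k+1)).erase j, a l * x j ^ l with hS
    have hSabs : |S| ≤ (k:ℝ) * (M ^ (j*j) / M) := by
      calc |S| ≤ ∑ l ∈ (Finset.range (k+1)).erase j, |a l * x j ^ l| :=
            Finset.abs_sum_le_sum_abs _ _
        _ ≤ ∑ _l ∈ (Finset.range (k+1)).erase j, M ^ (j*j) / M := by
            apply Finset.sum_le_sum
            intro l hl
            have hlj : l ≠ j := Finset.ne_of_mem_erase hl
            rw [hterm j l, abs_mul, abs_pow, abs_neg, abs_one, one_pow, one_mul,
              abs_of_nonneg (by positivity)]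
            exact hbound j l hlj
        _ = (((Finset.range (k+1)).erase j).card : ℝ) * (M ^ (j*j) / M) := by
            rw [Finset.sum_const, nsmul_eq_mul]
        _ = (k:ℝ) * (M ^ (j*j) / M) := by
            rw [Finset.card_erase_of_mem hjmem, Finset.card_range]
            norm_num
    have hkM : (k:ℝ) < M := by
      have hkn' : (k:ℝ) ≤ (n:ℝ) := by exact_mod_cast hkn
      rw [hMdef]; linarith
    have hfin : (k:ℝ) * (M ^ (j*j) / M) < M ^ (j*j) := by
      calc (k:ℝ) * (M ^ (j*j) / M) < M * (M ^ (j*j) / M) :=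
            mul_lt_mul_of_pos_right hkM (by positivity)
        _ = M ^ (j*j) := by field_simp
    have habs2 : -((k:ℝ) * (M ^ (j*j) / M)) ≤ (-1:ℝ)^j * S := by
      have h1 : |(-1:ℝ)^j * S| = |S| := by
        rw [abs_mul, abs_pow, abs_neg, abs_one, one_pow, one_mul]
      have h2 := neg_abs_le ((-1:ℝ)^j * S)
      rw [h1] at h2
      linarith
    rw [mul_add, hmain]
    linarith
  have hxanti : StrictAnti x := by
    apply strictAnti_nat_of_succ_lt
    intro m
    rw [hx]
    simp only
    have hC : (0:ℝ) < M ^ (2*n) := by positivity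
    rw [div_lt_div_iff_of_pos_right hC]
    have : M ^ (2*m) < M ^ (2*(m+1)) := pow_lt_pow_right₀ hM1 (by omega)
    linarith
  have hroot : ∀ j, j < k → ∃ t, t ∈ Set.Ioo (x (j+1)) (x j) ∧ p.eval t = 0 := by
    intro j hj
    have hle : x (j+1) ≤ x j := le_of_lt (hxanti (by omega))
    have hcont : ContinuousOn (fun t => p.eval t) (Set.Icc (x (j+1)) (x j)) :=
      (Polynomial.continuous p).continuousOn
    have hs1 := hsign j (by omega)
    have hs2 := hsign (j+1) (by omega)
    rcases Nat.even_or_odd j with he | ho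
    · have e1 : (-1:ℝ)^j = 1 := he.neg_one_pow
      have e2 : (-1:ℝ)^(j+1) = -1 := by rw [pow_succ, e1]; ring
      rw [e1, one_mul] at hs1
      rw [e2] at hs2
      have h0 : (0:ℝ) ∈ Set.Ioo (p.eval (x (j+1))) (p.eval (x j)) :=
        ⟨by linarith, hs1⟩
      obtain ⟨t, ht, hteq⟩ := intermediate_value_Ioo hle hcont h0
      exact ⟨t, ht, hteq⟩
    · have e1 : (-1:ℝ)^j = -1 := ho.neg_one_pow
      have e2 : (-1:ℝ)^(j+1) = 1 := by rw [pow_succ, e1]; ring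
      rw [e1] at hs1
      rw [e2, one_mul] at hs2
      have h0 : (0:ℝ) ∈ Set.Ioo (p.eval (x j)) (p.eval (x (j+1))) :=
        ⟨by linarith, hs2⟩
      obtain ⟨t, ht, hteq⟩ := intermediate_value_Ioo' hle hcont h0
      exact ⟨t, ht, hteq⟩
  set r : ℕ → ℝ := fun j => if h : j < k then (hroot j h).choose else 0 with hrdef
  have hrspec : ∀ j, ∀ h : j < k, r j ∈ Set.Ioo (x (j+1)) (x j) ∧ p.eval (r j) = 0 := by
    intro j h
    rw [hrdef]
    simp only [dif_pos h]
    exact (hroot j h).choose_spec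
  have hrlt : ∀ j1 j2, j1 < j2 → j2 < k → r j2 < r j1 := by
    intro j1 j2 h12 h2k
    have hA := (hrspec j1 (by omega)).1
    have hB := (hrspec j2 h2k).1
    have hxle : x j2 ≤ x (j1+1) := by
      rcases eq_or_lt_of_le (show j1+1 ≤ j2 by omega) with h | h
      · rw [h]
      · exact le_of_lt (hxanti h)
    calc r j2 < x j2 := hB.2
      _ ≤ x (j1+1) := hxle
      _ < r j1 := hA.1
  intro z hz
  by_contra him
  set pC := p.map (algebraMap ℝ ℂ) with hpC
  have hp0 : p ≠ 0 := by
    intro h0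
    rw [h0] at hdeg
    simp at hdeg
    omega
  have hpC0 : pC ≠ 0 := (Polynomial.map_ne_zero_iff (algebraMap ℝ ℂ).injective).mpr hp0
  have hzroot : z ∈ pC.roots := by
    rw [Polynomial.mem_roots hpC0]
    rw [Polynomial.IsRoot, hpC, Polynomial.eval_map, ← Polynomial.aeval_def]
    exact hz
  have hrroot : ∀ j, j < k → ((r j : ℝ) : ℂ) ∈ pC.roots := by
    intro j hj
    rw [Polynomial.mem_roots hpC0, Polynomial.IsRoot, hpC, Polynomial.eval_map,
      ← Polynomial.aeval_def, aeval_real, (hrspec j hj).2]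
    norm_num
  set F : Finset ℂ := insert z ((Finset.range k).image (fun j => ((r j : ℝ) : ℂ))) with hF
  have hinj : Set.InjOn (fun j => ((r j : ℝ) : ℂ)) (Finset.range k) := by
    intro u hu v hv huv
    simp only [Finset.coe_range, Set.mem_Iio] at hu hv
    have huv'' : ((r u : ℝ) : ℂ) = ((r v : ℝ) : ℂ) := by simpa using huv
    have huv' : r u = r v := by exact_mod_cast huv''
    by_contra hne
    rcases lt_or_gt_of_ne hne with h | h
    · have := hrlt u v h hv; linarith [this, huv'.le, huv'.ge]
    · have := hrlt v u h hu; linarith [this, huv'.le, huv'.ge]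
  have hznot : z ∉ (Finset.range k).image (fun j => ((r j : ℝ) : ℂ)) := by
    intro hmem
    obtain ⟨j, _, hjeq⟩ := Finset.mem_image.mp hmem
    apply him
    rw [← hjeq]
    simp
  have hcard : F.card = k + 1 := by
    rw [hF, Finset.card_insert_of_notMem hznot, Finset.card_image_of_injOn hinj,
      Finset.card_range]
  have hsub : F.val ≤ pC.roots := by
    rw [Multiset.le_iff_subset F.nodup]
    intro w hw
    rw [← Finset.mem_def] at hw
    rw [hF, Finset.mem_insert] at hw
    rcases hw with rfl | hw
    · exact hzroot
    · obtain ⟨j, hj, rfl⟩ := Finset.mem_image.mp hw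
      exact hrroot j (Finset.mem_range.mp hj)
  have hle := Multiset.card_le_card hsub
  have hroots := Polynomial.card_roots' pC
  have hdegC : pC.natDegree = k := by rw [hpC, Polynomial.natDegree_map]; exact hdeg
  have hFcard : Multiset.card F.val = k + 1 := hcard
  omega
end SH

theorem stmt0 :
    (∀ (n : ℕ) (a : ℕ → ℝ), SectionHyperbolic a n →
      ∀ i, 1 ≤ i → i ≤ n - 1 → a i ^ 2 ≥ 3 * (a (i - 1) * a (i + 1))) ∧
    (∀ i : ℕ, 1 ≤ i →
      3 ≤ sInf {r : ℝ | ∃ (n : ℕ) (a : ℕ → ℝ), i + 1 ≤ n ∧ SectionHyperbolic a n ∧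
        r = a i ^ 2 / (a (i - 1) * a (i + 1))}) := by
  constructor
  · intro n a hsh i h1 h2
    exact SH.part1 n a hsh i h1 (by omega)
  · intro i hi
    obtain ⟨a, hsh⟩ := SH.exists_section_hyperbolic (i+1)
    apply le_csInf
    · exact ⟨a i ^ 2 / (a (i-1) * a (i+1)), ⟨i+1, a, le_refl _, hsh, rfl⟩⟩
    · rintro r ⟨n, a, hn, hsh, rfl⟩
      have hpos := hsh.1
      have h3 := SH.part1 n a hsh i hi (by omega)
      have hd : 0 < a (i-1) * a (i+1) :=
        mul_pos (hpos (i-1) (by omega)) (hpos (i+1) (by omega))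
      rw [le_div_iff₀ hd]
      linarith
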